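/- (Monochromatic cycle creation.) In the (k,ℓ)-pebble game with colors, suppose a single move applied to a reachable configuration creates a monochromatic cycle of color c_i. Then, before the move, there is a vertex v holding a pebble p of color c_i and a vertex w lying in the same maximal monochromatic c_i-colored tree as v, and the move is exactly one of: (M1) an add-edge move adding the edge vw and covering it with p; or (M2) a pebble-slide move reversing an edge wv and covering the resulting edge vw with p. No other move creates a monochromatic cycle. -/
import Mathlib


open scoped Classical

namespace PebbleGame

/-- A configuration of the `(k,ℓ)`-pebble game with colors: a directed multigraph
whose edges are records `(tail, head, color)` (the color of an edge is the color of
the unique pebble lying on it), together with the multiset of colors of the pebbles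
sitting on each vertex. -/
structure PGConfig (V : Type) (k : ℕ) where
  edges : Multiset (V × V × Fin k)
  pebs : V → Multiset (Fin k)

variable {V : Type} [DecidableEq V] {k ℓ : ℕ}

/-- The configuration resulting from an add-edge move: a pebble of color `c` is picked
up from `v`, the directed edge `vw` is added and the pebble is placed on it. -/
def addEdgeCfg (H : PGConfig V k) (v w : V) (c : Fin k) : PGConfig V k :=
  ⟨(v, w, c) ::ₘ H.edges, Function.update H.pebs v ((H.pebs v).erase c)⟩

/-- The configuration resulting from a pebble-slide move along the edge `(v, w, c)`,
using a pebble of color `c'` on `w`: the edge `vw` is replaced by `wv`, the pebble of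
color `c` that was on the edge goes to `v`, and the pebble of color `c'` from `w` is
placed on the new edge `wv`. -/
def slideCfg (H : PGConfig V k) (v w : V) (c c' : Fin k) : PGConfig V k :=
  ⟨(w, v, c') ::ₘ H.edges.erase (v, w, c),
    Function.update (Function.update H.pebs w ((H.pebs w).erase c')) v
      (c ::ₘ Function.update H.pebs w ((H.pebs w).erase c') v)⟩

/-- A legal move of the `(k,ℓ)`-pebble game with colors. -/
inductive Step (k ℓ : ℕ) : PGConfig V k → PGConfig V k → Prop
  | add (H : PGConfig V k) (v w : V) (c : Fin k)
      (hpeb : ℓ + 1 ≤ ∑ u ∈ ({v, w} : Finset V), (H.pebs u).card)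
      (hc : c ∈ H.pebs v) :
      Step k ℓ H (addEdgeCfg H v w c)
  | slide (H : PGConfig V k) (v w : V) (c c' : Fin k)
      (he : (v, w, c) ∈ H.edges)
      (hc : c' ∈ H.pebs w) :
      Step k ℓ H (slideCfg H v w c c')

/-- The initial configuration: no edges, and one pebble of each of the `k` colors on
every vertex. -/
def initCfg (V : Type) [DecidableEq V] [Fintype V] (k : ℕ) : PGConfig V k :=
  ⟨0, fun _ => Finset.univ.val⟩

/-- A configuration is reachable if it arises from the initial configuration by a
finite sequence of legal moves. -/
def Reachable [Fintype V] (k ℓ : ℕ) (H : PGConfig V k) : Prop :=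
  Relation.ReflTransGen (Step k ℓ) (initCfg V k) H

/-- The underlying undirected multigraph (multiset of edges) of a configuration. -/
def undirected (H : PGConfig V k) : Multiset (Sym2 V) :=
  H.edges.map fun e => s(e.1, e.2.1)

/-- The (undirected) edges of a configuration carrying a pebble of color `c`. -/
def monoEdges (H : PGConfig V k) (c : Fin k) : Multiset (Sym2 V) :=
  (H.edges.filter fun e => e.2.2 = c).map fun e => s(e.1, e.2.1)

/-- The undirected edges of color `c` among a multiset `F` of directed colored
edges. -/
def monoOf (F : Multiset (V × V × Fin k)) (c : Fin k) : Multiset (Sym2 V) :=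
  (F.filter fun e => e.2.2 = c).map fun e => s(e.1, e.2.1)

/-- `G` (a multiset of undirected edges on the fixed finite vertex set `V`) is a
`(k,ℓ)`-pebble-game graph if it is the underlying undirected multigraph of some
reachable configuration. -/
def PebbleGameGraph [Fintype V] (k ℓ : ℕ) (E : Multiset (Sym2 V)) : Prop :=
  ∃ H : PGConfig V k, Reachable k ℓ H ∧ undirected H = E

/-- The edges of `E` spanned by the vertex set `S` (both endpoints in `S`). -/
def spanned (E : Multiset (Sym2 V)) (S : Finset V) : Multiset (Sym2 V) :=
  E.filter fun e => e ∈ S.sym2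

/-- A multigraph is `(k,ℓ)`-sparse if every nonempty set of `n'` vertices spans at
most `k n' - ℓ` edges. -/
def Sparse (k ℓ : ℕ) (E : Multiset (Sym2 V)) : Prop :=
  ∀ S : Finset V, S.Nonempty → (spanned E S).card ≤ k * S.card - ℓ

/-- A multigraph is `(k,ℓ)`-tight if it is `(k,ℓ)`-sparse with exactly `k|V| - ℓ`
edges. -/
def Tight [Fintype V] (k ℓ : ℕ) (E : Multiset (Sym2 V)) : Prop :=
  Sparse k ℓ E ∧ E.card = k * Fintype.card V - ℓ

/-- Connectivity (as undirected multigraphs) via the edges of `F`. -/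
def Conn (F : Multiset (Sym2 V)) : V → V → Prop :=
  Relation.ReflTransGen fun a b => s(a, b) ∈ F

/-- The connected components of the graph with vertex set `S` and edge multiset `F`
(whose edges are assumed to be spanned by `S`), as a finset of vertex sets. -/
noncomputable def components (S : Finset V) (F : Multiset (Sym2 V)) : Finset (Finset V) :=
  S.image fun v => S.filter fun u => Conn F v u

/-- The tree-pieces of the graph `(S, F)`: connected components that contain no cycle,
i.e. whose spanned edge count is exactly one less than their vertex count (an isolated
vertex is a tree-piece). -/
noncomputable def treePieces (S : Finset V) (F : Multiset (Sym2 V)) : Finset (Finset V) :=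
  (components S F).filter fun C => (spanned F C).card + 1 = C.card

/-- The number of tree-pieces of the graph `(S, F)`. -/
noncomputable def treePieceCount (S : Finset V) (F : Multiset (Sym2 V)) : ℕ :=
  (treePieces S F).card

/-- A multigraph contains a cycle iff some nonempty vertex set spans at least as many
edges as it has vertices. -/
def HasCycle (F : Multiset (Sym2 V)) : Prop :=
  ∃ S : Finset V, S.Nonempty ∧ S.card ≤ (spanned F S).card

/-- A spanning tree on the whole (finite) vertex set: connected with `|V| - 1` edges. -/
def IsSpanningTree [Fintype V] (T : Multiset (Sym2 V)) : Prop :=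
  (∀ u v : V, Conn T u v) ∧ T.card + 1 = Fintype.card V

/-- A spanning map-graph: the edges admit an orientation in which every vertex has
out-degree exactly one. -/
def IsSpanningMapGraph [Fintype V] (T : Multiset (Sym2 V)) : Prop :=
  ∃ M : Multiset (V × V), M.map (fun p => s(p.1, p.2)) = T ∧
    ∀ v : V, (M.filter fun p => p.1 = v).card = 1

/-- A `(k,ℓ)`-maps-and-trees decomposition: `ℓ` edge-disjoint spanning trees and
`k - ℓ` edge-disjoint spanning map-graphs whose union is `E`. -/
def MapsAndTrees [Fintype V] (k ℓ : ℕ) (E : Multiset (Sym2 V)) : Prop :=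
  ∃ (T : Fin ℓ → Multiset (Sym2 V)) (M : Fin (k - ℓ) → Multiset (Sym2 V)),
    ((∑ i, T i) + ∑ j, M j) = E ∧ (∀ i, IsSpanningTree (T i)) ∧
      ∀ j, IsSpanningMapGraph (M j)

/-- `(S, T)` is a (possibly single-vertex) tree: nonempty vertex set `S`, edges spanned
by `S`, connected on `S`, and `|T| + 1 = |S|`. -/
def IsTreeOn (S : Finset V) (T : Multiset (Sym2 V)) : Prop :=
  S.Nonempty ∧ (∀ e ∈ T, e ∈ S.sym2) ∧ (∀ u ∈ S, ∀ v ∈ S, Conn T u v) ∧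
    T.card + 1 = S.card

/-- An `ℓTk` decomposition of `E`: `ℓ` edge-disjoint (not necessarily spanning,
possibly single-vertex) trees `(S i, T i)` whose edges partition `E`, such that every
vertex belongs to exactly `k` of the trees. -/
def LTkDecomp (k ℓ : ℕ) (E : Multiset (Sym2 V)) (S : Fin ℓ → Finset V)
    (T : Fin ℓ → Multiset (Sym2 V)) : Prop :=
  (∑ i, T i) = E ∧ (∀ i, IsTreeOn (S i) (T i)) ∧
    ∀ v : V, (Finset.univ.filter fun i => v ∈ S i).card = k

/-- A proper `ℓTk`: an `ℓTk` decomposition such that every nonempty subgraph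
(vertex set `U`, together with a sub-multiset `F i` of each tree spanned by `U`)
contains at least `ℓ` tree-pieces, the tree-pieces being the connected components of
the intersections of the trees with the subgraph. -/
def ProperLTk (k ℓ : ℕ) (E : Multiset (Sym2 V)) : Prop :=
  ∃ (S : Fin ℓ → Finset V) (T : Fin ℓ → Multiset (Sym2 V)),
    LTkDecomp k ℓ E S T ∧
      ∀ U : Finset V, U.Nonempty →
        ∀ F : Fin ℓ → Multiset (Sym2 V),
          (∀ i, F i ≤ T i) → (∀ i, ∀ e ∈ F i, e ∈ U.sym2) →
            ℓ ≤ ∑ i, treePieceCount (U ∩ S i) (F i)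

/-- One pebble-slide move (as a relation between configurations). -/
def SlideRel (k : ℕ) (A B : PGConfig V k) : Prop :=
  ∃ (v w : V) (c c' : Fin k), (v, w, c) ∈ A.edges ∧ c' ∈ A.pebs w ∧
    B = slideCfg A v w c c'

/-- A canonical move of the `(k,ℓ)`-pebble game with colors: add-edge moves cover the
new edge with a color present on both endpoints if one exists, and otherwise with the
highest-numbered color present; pebble-slide moves never create a monochromatic
cycle. -/
inductive CanStep (k ℓ : ℕ) : PGConfig V k → PGConfig V k → Prop
  | add (H : PGConfig V k) (v w : V) (c : Fin k)
      (hpeb : ℓ + 1 ≤ ∑ u ∈ ({v, w} : Finset V), (H.pebs u).card)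
      (hc : c ∈ H.pebs v)
      (hcanon : c ∈ H.pebs w ∨
        ((∀ c' : Fin k, c' ∈ H.pebs v → c' ∉ H.pebs w) ∧
          ∀ c' : Fin k, (c' ∈ H.pebs v ∨ c' ∈ H.pebs w) → c' ≤ c)) :
      CanStep k ℓ H (addEdgeCfg H v w c)
  | slide (H : PGConfig V k) (v w : V) (c c' : Fin k)
      (he : (v, w, c) ∈ H.edges)
      (hc : c' ∈ H.pebs w)
      (hnocycle : ∀ i : Fin k,
        HasCycle (monoEdges (slideCfg H v w c c') i) → HasCycle (monoEdges H i)) :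
      CanStep k ℓ H (slideCfg H v w c c')

/-- The graph obtained from a configuration by replacing every pebble lying on a
vertex by a loop at that vertex. -/
def withLoops [Fintype V] (H : PGConfig V k) : Multiset (Sym2 V) :=
  undirected H + Finset.univ.val.bind fun v => Multiset.replicate (H.pebs v).card s(v, v)

end PebbleGame
open PebbleGame

section Aux

variable {V : Type} [DecidableEq V] {k : ℕ}

lemma monoOf_mono {F F' : Multiset (V × V × Fin k)} (h : F ≤ F') (c : Fin k) :
    monoOf F c ≤ monoOf F' c :=
  Multiset.map_le_map (Multiset.filter_le_filter _ h)

lemma hasCycle_mono {E F : Multiset (Sym2 V)} (h : E ≤ F) : HasCycle E → HasCycle F := by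
  rintro ⟨S, hS, hc⟩
  exact ⟨S, hS, hc.trans (Multiset.card_le_card (Multiset.filter_le_filter _ h))⟩

lemma monoOf_cons (v w : V) (c₀ c : Fin k) (F : Multiset (V × V × Fin k)) :
    monoOf ((v, w, c₀) ::ₘ F) c =
      if c₀ = c then s(v, w) ::ₘ monoOf F c else monoOf F c := by
  unfold monoOf
  by_cases h : c₀ = c <;>
    simp [Multiset.filter_cons, h]

lemma conn_of_new_cycle (E : Multiset (Sym2 V)) (v w : V)
    (hb : ¬HasCycle E) (ha : HasCycle (s(v, w) ::ₘ E)) :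
    Conn E v w := by
  unfold HasCycle at hb
  push_neg at hb
  obtain ⟨S, hSne, hScard⟩ := ha
  by_cases he : s(v, w) ∈ S.sym2
  · -- v, w ∈ S
    rw [Finset.mk_mem_sym2_iff] at he
    obtain ⟨hvS, hwS⟩ := he
    have hsp : (spanned (s(v, w) ::ₘ E) S).card = (spanned E S).card + 1 := by
      unfold spanned
      rw [Multiset.filter_cons_of_pos _ (by rw [Finset.mk_mem_sym2_iff]; exact ⟨hvS, hwS⟩)]
      simp
    by_contra hconn
    -- closure of the component of v in S
    set C : Finset V := S.filter fun u => Conn E v u with hC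
    have hvC : v ∈ C := Finset.mem_filter.2 ⟨hvS, Relation.ReflTransGen.refl⟩
    have hwC : w ∉ C := fun h => hconn (Finset.mem_filter.1 h).2
    have hCS : C ⊆ S := Finset.filter_subset _ _
    have hwSC : w ∈ S \ C := Finset.mem_sdiff.2 ⟨hwS, hwC⟩
    -- edges spanned by S split between C and S \ C
    have hsplit : ∀ e ∈ spanned E S, e ∉ C.sym2 → e ∈ (S \ C).sym2 := by
      intro e heS heC
      have heE : e ∈ E := Multiset.mem_of_mem_filter heS
      have heS2 : e ∈ S.sym2 := Multiset.of_mem_filter heS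
      induction e using Sym2.inductionOn with
      | hf a b =>
        rw [Finset.mk_mem_sym2_iff] at heS2 ⊢
        rw [Finset.mk_mem_sym2_iff] at heC
        push_neg at heC
        have key : a ∈ C → b ∈ C := by
          intro haC
          exact Finset.mem_filter.2 ⟨heS2.2,
            (Finset.mem_filter.1 haC).2.tail heE⟩
        have key' : b ∈ C → a ∈ C := by
          intro hbC
          refine Finset.mem_filter.2 ⟨heS2.1, (Finset.mem_filter.1 hbC).2.tail ?_⟩
          rwa [Sym2.eq_swap]
        have haC : a ∉ C := fun h => heC h (key h)
        have hbC : b ∉ C := fun h => haC (key' h)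
        exact ⟨Finset.mem_sdiff.2 ⟨heS2.1, haC⟩, Finset.mem_sdiff.2 ⟨heS2.2, hbC⟩⟩
    -- count
    have hsum : (spanned E S).card =
        ((spanned E S).filter (fun e => e ∈ C.sym2)).card +
          ((spanned E S).filter (fun e => e ∉ C.sym2)).card := by
      rw [← Multiset.card_add, Multiset.filter_add_not]
    have hA : ((spanned E S).filter (fun e => e ∈ C.sym2)).card ≤ (spanned E C).card := by
      refine Multiset.card_le_card (Multiset.le_filter.2 ⟨?_, ?_⟩)
      · exact le_trans (Multiset.filter_le _ _) (Multiset.filter_le _ _)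
      · intro e hes
        exact (Multiset.mem_filter.1 hes).2
    have hB : ((spanned E S).filter (fun e => e ∉ C.sym2)).card ≤
        (spanned E (S \ C)).card := by
      refine Multiset.card_le_card (Multiset.le_filter.2 ⟨?_, ?_⟩)
      · exact le_trans (Multiset.filter_le _ _) (Multiset.filter_le _ _)
      · intro e hes
        exact hsplit e (Multiset.mem_of_mem_filter hes) (Multiset.mem_filter.1 hes).2
    have h1 : (spanned E C).card < C.card := hb C ⟨v, hvC⟩
    have h2 : (spanned E (S \ C)).card < (S \ C).card := hb (S \ C) ⟨w, hwSC⟩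
    have h3 : (S \ C).card = S.card - C.card := Finset.card_sdiff_of_subset hCS
    have h4 : C.card ≤ S.card := Finset.card_le_card hCS
    omega
  · have : spanned (s(v, w) ::ₘ E) S = spanned E S := by
      unfold spanned
      rw [Multiset.filter_cons_of_neg _ he]
    rw [this] at hScard
    exact absurd hScard (Nat.not_le.2 (hb S hSne))

end Aux

/-- monochromatic cycle creation: if a single legal move applied to a
reachable configuration creates a monochromatic cycle of color `c`, then before the
move there are vertices `v` (holding a pebble `p` of color `c`) and `w` in the same
maximal monochromatic `c`-colored tree, and the move is either (M1) an add-edge move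
adding `vw` covered with `p`, or (M2) a pebble-slide move reversing an edge `wv` and
covering the resulting edge `vw` with `p`. -/
theorem monochromatic_cycle_creation {V : Type} [Fintype V] [DecidableEq V]
    (k ℓ : ℕ) (hk : 1 ≤ k) (hℓ : ℓ ≤ 2 * k - 1) (H H' : PGConfig V k)
    (hH : Reachable k ℓ H) (hstep : Step k ℓ H H') (c : Fin k)
    (hbefore : ¬HasCycle (monoEdges H c)) (hafter : HasCycle (monoEdges H' c)) :
    ∃ v w : V, c ∈ H.pebs v ∧ Conn (monoEdges H c) v w ∧
      (H' = addEdgeCfg H v w c ∨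
        ∃ c' : Fin k, (w, v, c') ∈ H.edges ∧ H' = slideCfg H w v c' c) := by
  cases hstep with
  | add v₀ w₀ c₀ hpeb hc =>
    have hmono : monoEdges (addEdgeCfg H v₀ w₀ c₀) c =
        if c₀ = c then s(v₀, w₀) ::ₘ monoEdges H c else monoEdges H c :=
      monoOf_cons v₀ w₀ c₀ c H.edges
    by_cases hcc : c₀ = c
    · subst hcc
      rw [hmono, if_pos rfl] at hafter
      exact ⟨v₀, w₀, hc, conn_of_new_cycle _ v₀ w₀ hbefore hafter, Or.inl rfl⟩
    · rw [hmono, if_neg hcc] at hafter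
      exact absurd hafter hbefore
  | slide v₀ w₀ c₀ c' he hc =>
    set F := H.edges.erase (v₀, w₀, c₀) with hF
    have hEd : H.edges = (v₀, w₀, c₀) ::ₘ F := (Multiset.cons_erase he).symm
    have hmonoH : monoEdges H c =
        if c₀ = c then s(v₀, w₀) ::ₘ monoOf F c else monoOf F c := by
      show monoOf H.edges c = _
      rw [hEd]; exact monoOf_cons _ _ _ _ _
    have hmonoH' : monoEdges (slideCfg H v₀ w₀ c₀ c') c =
        if c' = c then s(w₀, v₀) ::ₘ monoOf F c else monoOf F c :=
      monoOf_cons _ _ _ _ _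
    by_cases h1 : c' = c
    · subst h1
      by_cases h2 : c₀ = c'
      · subst h2
        rw [hmonoH', if_pos rfl] at hafter
        rw [hmonoH, if_pos rfl] at hbefore
        rw [Sym2.eq_swap] at hbefore
        exact absurd hafter hbefore
      · rw [hmonoH, if_neg h2] at hbefore
        rw [hmonoH', if_pos rfl] at hafter
        have hconn := conn_of_new_cycle _ w₀ v₀ hbefore hafter
        rw [hmonoH, if_neg h2]
        exact ⟨w₀, v₀, hc, hconn, Or.inr ⟨c₀, he, rfl⟩⟩
    · rw [hmonoH', if_neg h1] at hafter
      have hle : monoOf F c ≤ monoEdges H c :=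
        monoOf_mono (Multiset.erase_le _ _) c
      exact absurd (hasCycle_mono hle hafter) hbefore
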